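/- For a digraph D and an integer k, the following are equivalent: (1) the dichromatic number of D is at most k; (2) there exists a total ordering of V(D) such that there is no directed path on k+1 vertices all of whose arcs are backward (an arc xy is backward if y precedes x in the ordering). -/

import Mathlib

/-- A digraph: no loops, no parallel arcs, no anti-parallel arcs. -/
structure Digr (V : Type) where
  Adj : V → V → Prop
  no_anti : ∀ u v : V, Adj u v → ¬ Adj v u

namespace Digr

variable {V : Type}

/-- Adjacency in the underlying undirected graph. -/
def Adjd (D : Digr V) (u v : V) : Prop := D.Adj u v ∨ D.Adj v u

/-- `c : ZMod n → V` is a directed cycle of length `n` (as a subdigraph). -/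
def IsDiCycle (D : Digr V) {n : ℕ} (c : ZMod n → V) : Prop :=
  0 < n ∧ Function.Injective c ∧ ∀ i : ZMod n, D.Adj (c i) (c (i + 1))

/-- `S` induces an acyclic subdigraph. -/
def AcyclicOn (D : Digr V) (S : Set V) : Prop :=
  ¬ ∃ (n : ℕ) (c : ZMod n → V), D.IsDiCycle c ∧ ∀ i : ZMod n, c i ∈ S

/-- The dichromatic number of `D` is at most `k`. -/
def DichromAtMost (D : Digr V) (k : ℕ) : Prop :=
  ∃ f : V → Fin k, ∀ i : Fin k, D.AcyclicOn {v | f v = i}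

/-- The subdigraph induced on a set of vertices. -/
def induce (D : Digr V) (S : Set V) : Digr S :=
  ⟨fun a b => D.Adj a.1 b.1, fun a b h => D.no_anti a.1 b.1 h⟩

/-- Out-neighbourhood of a set: vertices outside `X` with an in-neighbour in `X`. -/
def Nout (D : Digr V) (X : Set V) : Set V := {y | y ∉ X ∧ ∃ x ∈ X, D.Adj x y}

/-- In-neighbourhood of a set: vertices outside `X` with an out-neighbour in `X`. -/
def Nin (D : Digr V) (X : Set V) : Set V := {y | y ∉ X ∧ ∃ x ∈ X, D.Adj y x}

/-- Iterated neighbourhood levels: `(N_k⁺(X), N_k⁻(X), ⋃_{i ≤ k} N_i(X))`. -/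
def levAux (D : Digr V) (X : Set V) : ℕ → Set V × Set V × Set V
  | 0 => (X, X, X)
  | k + 1 =>
    let t := levAux D X k
    (D.Nout t.1 \ t.2.2, D.Nin t.2.1 \ t.2.2,
      t.2.2 ∪ (D.Nout t.1 \ t.2.2) ∪ (D.Nin t.2.1 \ t.2.2))

/-- `N_k⁺(X)`. -/
def NlevP (D : Digr V) (X : Set V) (k : ℕ) : Set V := (D.levAux X k).1

/-- `N_k⁻(X)`. -/
def NlevM (D : Digr V) (X : Set V) (k : ℕ) : Set V := (D.levAux X k).2.1

/-- `N_k(X) = N_k⁺(X) ∪ N_k⁻(X)`. -/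
def Nlev (D : Digr V) (X : Set V) (k : ℕ) : Set V := D.NlevP X k ∪ D.NlevM X k

/-- `a → b → c → d` is an induced directed path on 4 vertices. -/
def InducedP4 (D : Digr V) (a b c d : V) : Prop :=
  D.Adj a b ∧ D.Adj b c ∧ D.Adj c d ∧ a ≠ c ∧ a ≠ d ∧ b ≠ d ∧
    ¬ D.Adjd a c ∧ ¬ D.Adjd a d ∧ ¬ D.Adjd b d

/-- `p` is an induced directed path on 6 vertices. -/
def InducedP6 (D : Digr V) (p : Fin 6 → V) : Prop :=
  Function.Injective p ∧ (∀ i : Fin 5, D.Adj (p i.castSucc) (p i.succ)) ∧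
    ∀ i j : Fin 6, (i : ℕ) + 1 < (j : ℕ) → ¬ D.Adjd (p i) (p j)

/-- The underlying undirected graph has no triangle. -/
def TriangleFree (D : Digr V) : Prop :=
  ¬ ∃ a b c : V, D.Adjd a b ∧ D.Adjd b c ∧ D.Adjd a c

/-- A dipolar set. -/
def Dipolar (D : Digr V) (S : Set V) : Prop :=
  ∀ x ∈ S, (∀ y, D.Adj x y → y ∈ S) ∨ (∀ y, D.Adj y x → y ∈ S)

/-- A directed path all of whose arcs are backward with respect to the order `lt`. -/
def BackwardPath (D : Digr V) (lt : V → V → Prop) {m : ℕ} (p : Fin m → V) : Prop :=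
  Function.Injective p ∧
    ∀ i : ℕ, ∀ h : i + 1 < m,
      D.Adj (p ⟨i, Nat.lt_of_succ_lt h⟩) (p ⟨i + 1, h⟩) ∧
        lt (p ⟨i + 1, h⟩) (p ⟨i, Nat.lt_of_succ_lt h⟩)

lemma transGen_walk {R : V → V → Prop} {a b : V} (h : Relation.TransGen R a b) :
    ∃ n, 0 < n ∧ ∃ w : ℕ → V, w 0 = a ∧ w n = b ∧ ∀ i < n, R (w i) (w (i + 1)) := by
  induction h with
  | @single b' hr =>
    refine ⟨1, one_pos, fun i => if i = 0 then a else b', by simp, by simp, ?_⟩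
    intro i hi
    interval_cases i
    simpa using hr
  | @tail b' c' hab hr ih =>
    obtain ⟨n, hn, w, h0, hn', hs⟩ := ih
    refine ⟨n + 1, by omega, fun i => if i ≤ n then w i else c', by simp [h0], by simp, ?_⟩
    intro i hi
    rcases Nat.lt_or_ge i n with h | h
    · simp only [if_pos (by omega : i ≤ n), if_pos (by omega : i + 1 ≤ n)]
      exact hs i h
    · have hin : i = n := by omega
      simp only [hin, if_pos le_rfl, if_neg (by omega : ¬ n + 1 ≤ n), hn']
      exact hr

lemma cycle_of_walk (D : Digr V) : ∀ n, 0 < n → ∀ w : ℕ → V, w n = w 0 →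
    (∀ i < n, D.Adj (w i) (w (i + 1))) →
    ∃ m, ∃ c : ZMod m → V, D.IsDiCycle c ∧ ∀ i : ZMod m, ∃ j < n, c i = w j := by
  intro n
  induction n using Nat.strong_induction_on with
  | _ n ih =>
  intro hn w hcl hs
  by_cases hinj : ∀ i < n, ∀ j < n, w i = w j → i = j
  · have h2 : 2 ≤ n := by
      by_contra h
      have hn1 : n = 1 := by omega
      subst hn1
      have := hs 0 one_pos
      rw [show (0:ℕ)+1 = 1 from rfl, hcl] at this
      exact D.no_anti _ _ this this
    haveI : NeZero n := ⟨by omega⟩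
    haveI : Fact (1 < n) := ⟨by omega⟩
    refine ⟨n, fun i => w i.val, ⟨by omega, ?_, ?_⟩, fun i => ⟨i.val, ZMod.val_lt i, rfl⟩⟩
    · intro i j hij
      exact ZMod.val_injective n (hinj _ (ZMod.val_lt i) _ (ZMod.val_lt j) hij)
    · intro i
      show D.Adj (w i.val) (w (i + 1).val)
      have hv : (i + 1).val = (i.val + 1) % n := by
        rw [ZMod.val_add, ZMod.val_one]
      rcases Nat.lt_or_ge (i.val + 1) n with h | h
      · rw [hv, Nat.mod_eq_of_lt h]
        exact hs i.val (by omega)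
      · have hin : i.val + 1 = n := by have := ZMod.val_lt i; omega
        rw [hv, hin, Nat.mod_self]
        have h3 := hs i.val (by omega)
        rw [hin, hcl] at h3
        exact h3
  · push_neg at hinj
    obtain ⟨i0, hi0, j0, hj0, hw0, hne⟩ := hinj
    obtain ⟨i, j, hj, hlt, hw⟩ : ∃ i j, j < n ∧ i < j ∧ w i = w j := by
      rcases Nat.lt_or_ge i0 j0 with h | h
      · exact ⟨i0, j0, hj0, h, hw0⟩
      · exact ⟨j0, i0, hi0, by omega, hw0.symm⟩
    have hcl' : (fun t => w (i + t)) (j - i) = (fun t => w (i + t)) 0 := by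
      show w (i + (j - i)) = w (i + 0)
      rw [show i + (j - i) = j from by omega, show i + 0 = i from rfl, hw]
    have hs' : ∀ t < j - i, D.Adj ((fun t => w (i + t)) t) ((fun t => w (i + t)) (t + 1)) := by
      intro t ht
      show D.Adj (w (i + t)) (w (i + (t + 1)))
      have := hs (i + t) (by omega)
      rwa [show i + t + 1 = i + (t + 1) from by omega] at this
    obtain ⟨m, c, hc, hmem⟩ := ih (j - i) (by omega) (by omega) (fun t => w (i + t)) hcl' hs'
    refine ⟨m, c, hc, fun i' => ?_⟩
    obtain ⟨t, ht, hct⟩ := hmem i'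
    exact ⟨i + t, by omega, hct⟩

lemma backward_trunc {D : Digr V} {lt : V → V → Prop} {m m' : ℕ} (h : m' ≤ m)
    {p : Fin m → V} (hp : D.BackwardPath lt p) :
    D.BackwardPath lt (p ∘ Fin.castLE h) := by
  refine ⟨hp.1.comp (Fin.castLE_injective h), ?_⟩
  intro i hi
  exact hp.2 i (lt_of_lt_of_le hi h)

lemma backward_desc {D : Digr V} {lt : V → V → Prop} [IsTrans V lt] {m : ℕ}
    {p : Fin m → V} (hp : D.BackwardPath lt p) :
    ∀ j (hj : j < m) i (hi : i < j), lt (p ⟨j, hj⟩) (p ⟨i, by omega⟩) := by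
  intro j
  induction j with
  | zero => omega
  | succ j ihj =>
    intro hj i hi
    have hstep := (hp.2 j hj).2
    rcases Nat.lt_or_ge i j with h | h
    · exact _root_.trans hstep (ihj (by omega) i h)
    · have : i = j := by omega
      subst this
      exact hstep

end Digr

open Digr

/-- Gallai-Roy-Vitaver for the dichromatic number: `χ⃗(D) ≤ k` iff there is a
total ordering of the vertices with no backward directed path on `k+1`
vertices. -/
theorem stmt3 {V : Type} (D : Digr V) (k : ℕ) :
    D.DichromAtMost k ↔
      ∃ lt : V → V → Prop, IsStrictTotalOrder V lt ∧
        ∀ p : Fin (k + 1) → V, ¬ D.BackwardPath lt p := by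
  constructor
  · rintro ⟨f, hf⟩
    set R : V → V → Prop := fun a b => D.Adj a b ∧ f a = f b with hR
    set T := Relation.TransGen R with hT
    have hTf : ∀ a b, T a b → f a = f b := by
      intro a b h
      induction h with
      | single h => exact h.2
      | tail _ h ih => exact ih.trans h.2
    have hTirr : ∀ v, ¬ T v v := by
      intro v hTv
      obtain ⟨n, hn, w, h0, hn', hs⟩ := transGen_walk hTv
      have hcol : ∀ i ≤ n, f (w i) = f v := by
        intro i hi
        induction i with
        | zero => rw [h0]
        | succ i ih2 => rw [← (hs i (by omega)).2]; exact ih2 (by omega)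
      obtain ⟨m, c, hc, hmem⟩ := D.cycle_of_walk n hn w (by rw [hn', h0]) (fun i hi => (hs i hi).1)
      refine hf (f v) ⟨m, c, hc, fun i => ?_⟩
      obtain ⟨j, hj, hcj⟩ := hmem i
      show f (c i) = f v
      rw [hcj]; exact hcol j (by omega)
    set P : V → V → Prop := fun a b => (f a).val < (f b).val ∨ T a b with hP
    have hPtrans : ∀ a b c, P a b → P b c → P a c := by
      rintro a b c (h1 | h1) (h2 | h2)
      · exact Or.inl (h1.trans h2)
      · exact Or.inl (by rw [← hTf _ _ h2]; exact h1)
      · exact Or.inl (by rw [hTf _ _ h1]; exact h2)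
      · exact Or.inr (h1.trans h2)
    have hPirr : ∀ v, ¬ P v v := by
      rintro v (h | h)
      · omega
      · exact hTirr v h
    set r : V → V → Prop := fun a b => P a b ∨ a = b with hr
    haveI hpo : IsPartialOrder V r :=
      { refl := fun a => Or.inr rfl
        trans := by
          rintro a b c (h1 | rfl) (h2 | rfl)
          · exact Or.inl (hPtrans _ _ _ h1 h2)
          · exact Or.inl h1
          · exact Or.inl h2
          · exact Or.inr rfl
        antisymm := by
          rintro a b (h1 | rfl) (h2 | h)
          · exact absurd (hPtrans _ _ _ h1 h2) (hPirr a)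
          · exact h.symm
          · rfl
          · rfl }
    obtain ⟨s, hsl, hrs⟩ := extend_partialOrder r
    haveI := hsl
    set lt : V → V → Prop := fun a b => s a b ∧ a ≠ b with hlt
    have hPlt : ∀ a b, P a b → lt a b := by
      intro a b h
      refine ⟨hrs _ _ (Or.inl h), ?_⟩
      rintro rfl
      exact hPirr a h
    refine ⟨lt, ?_, ?_⟩
    · refine { trichotomous := ?_, irrefl := ?_, trans := ?_ }
      · intro a b hab' hba'
        by_contra hab
        rcases total_of s a b with h | h
        · exact hab' ⟨h, hab⟩
        · exact hba' ⟨h, Ne.symm hab⟩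
      · intro a h; exact h.2 rfl
      · rintro a b c ⟨h1, hne1⟩ ⟨h2, hne2⟩
        refine ⟨trans_of s h1 h2, ?_⟩
        rintro rfl
        exact hne1 (antisymm h1 h2)
    · intro p hp
      have hdec : ∀ i (h : i + 1 < k + 1),
          (f (p ⟨i + 1, h⟩)).val < (f (p ⟨i, Nat.lt_of_succ_lt h⟩)).val := by
        intro i h
        obtain ⟨hadj, hl⟩ := hp.2 i h
        by_contra hge
        have hPxy : P (p ⟨i, Nat.lt_of_succ_lt h⟩) (p ⟨i + 1, h⟩) := by
          rcases Nat.lt_or_ge (f (p ⟨i, Nat.lt_of_succ_lt h⟩)).val (f (p ⟨i + 1, h⟩)).val with h' | h'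
          · exact Or.inl h'
          · have : f (p ⟨i, Nat.lt_of_succ_lt h⟩) = f (p ⟨i + 1, h⟩) := Fin.ext (by omega)
            exact Or.inr (Relation.TransGen.single ⟨hadj, this⟩)
        have := hPlt _ _ hPxy
        exact hl.2 (antisymm hl.1 this.1)
      have hmono : ∀ j (hj : j < k + 1), (f (p ⟨j, hj⟩)).val + j ≤ (f (p ⟨0, by omega⟩)).val := by
        intro j
        induction j with
        | zero => intro hj; simp
        | succ j ih =>
          intro hj
          have h1 := hdec j hj
          have h2 := ih (by omega)
          omega
      have h1 := hmono k (by omega)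
      have h2 := (f (p ⟨0, by omega⟩)).isLt
      omega
  · rintro ⟨lt, hlto, hnp⟩
    haveI := hlto
    set S : V → Set ℕ := fun v => {m : ℕ | ∃ p : Fin (m + 1) → V, D.BackwardPath lt p ∧ p 0 = v}
      with hS
    have h0S : ∀ v, 0 ∈ S v := by
      intro v
      exact ⟨fun _ => v, ⟨fun a b _ => Fin.ext (by omega), fun i hi => absurd hi (by omega)⟩, rfl⟩
    have hub : ∀ v, ∀ m ∈ S v, m < k := by
      intro v m hm
      by_contra h
      obtain ⟨p, hp, hp0⟩ := hm
      exact hnp (p ∘ Fin.castLE (by omega : k + 1 ≤ m + 1)) (backward_trunc _ hp)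
    have hbdd : ∀ v, BddAbove (S v) := fun v => ⟨k, fun m hm => (hub v m hm).le⟩
    set g : V → ℕ := fun v => sSup (S v) with hg
    have hgmem : ∀ v, g v ∈ S v := fun v => Nat.sSup_mem ⟨0, h0S v⟩ (hbdd v)
    have hglt : ∀ v, g v < k := fun v => hub v _ (hgmem v)
    have hkey : ∀ x y, D.Adj x y → lt y x → g y < g x := by
      intro x y hadj hyx
      obtain ⟨p, hp, hp0⟩ := hgmem y
      have hxp : ∀ i : Fin (g y + 1), p i ≠ x := by
        intro i hi
        by_cases h0 : i = 0
        · subst h0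
          rw [hp0] at hi
          subst hi
          exact irrefl_of lt _ hyx
        · have hpos : 0 < i.val := Nat.pos_of_ne_zero (fun h => h0 (Fin.ext h))
          have := backward_desc hp i.val i.isLt 0 hpos
          rw [Fin.eta] at this
          have h1 : lt (p i) y := by rwa [show (⟨0, by omega⟩ : Fin (g y + 1)) = 0 from rfl, hp0] at this
          have h2 : lt (p i) x := trans_of lt h1 hyx
          rw [hi] at h2
          exact irrefl_of lt x h2
      have hq : D.BackwardPath lt (Fin.cons x p : Fin (g y + 1 + 1) → V) := by
        constructor
        · rw [Fin.cons_injective_iff]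
          exact ⟨by rintro ⟨i, hi⟩; exact hxp i hi, hp.1⟩
        · intro i h
          cases i with
          | zero =>
            have h01 : (0 : ℕ) < g y + 1 := by omega
            have e0 : (Fin.cons x p : Fin (g y + 1 + 1) → V) ⟨0, Nat.lt_of_succ_lt h⟩ = x := rfl
            have e1 : (Fin.cons x p : Fin (g y + 1 + 1) → V) ⟨0 + 1, h⟩ = p ⟨0, h01⟩ := by
              have e := Fin.cons_succ (α := fun _ => V) x p ⟨0, h01⟩
              rwa [Fin.succ_mk] at e
            have e2 : p ⟨0, h01⟩ = y := by
              rw [show (⟨0, h01⟩ : Fin (g y + 1)) = 0 from by ext; simp, hp0]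
            rw [e0, e1, e2]
            exact ⟨hadj, hyx⟩
          | succ i =>
            have hi1 : i + 1 < g y + 1 := by omega
            have hi0 : i < g y + 1 := by omega
            have e0 : (Fin.cons x p : Fin (g y + 1 + 1) → V) ⟨i + 1, Nat.lt_of_succ_lt h⟩ =
                p ⟨i, hi0⟩ := by
              have e := Fin.cons_succ (α := fun _ => V) x p ⟨i, hi0⟩
              rwa [Fin.succ_mk] at e
            have e1 : (Fin.cons x p : Fin (g y + 1 + 1) → V) ⟨i + 1 + 1, h⟩ =
                p ⟨i + 1, hi1⟩ := by
              have e := Fin.cons_succ (α := fun _ => V) x p ⟨i + 1, hi1⟩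
              rwa [Fin.succ_mk] at e
            rw [e0, e1]
            exact hp.2 i hi1
      have hmem : g y + 1 ∈ S x := ⟨Fin.cons x p, hq, by simp⟩
      have : g y + 1 ≤ g x := le_csSup (hbdd x) hmem
      omega
    refine ⟨fun v => ⟨g v, hglt v⟩, ?_⟩
    rintro i ⟨n, c, ⟨hn, hcinj, hcadj⟩, hcS⟩
    have hcol : ∀ j, g (c j) = i.val := fun j => congrArg Fin.val (hcS j)
    rcases eq_or_ne n 1 with rfl | hn1
    · have := hcadj 0
      rw [Subsingleton.elim (0 + 1 : ZMod 1) 0] at this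
      exact D.no_anti _ _ this this
    · haveI : NeZero n := ⟨by omega⟩
      have hone : (1 : ZMod n) ≠ 0 := by
        intro h
        have : ((1 : ℕ) : ZMod n) = 0 := by exact_mod_cast h
        rw [ZMod.natCast_eq_zero_iff] at this
        exact hn1 (Nat.dvd_one.mp this)
      have hfwd : ∀ j : ZMod n, lt (c j) (c (j + 1)) := by
        intro j
        have hadj := hcadj j
        have hne : c j ≠ c (j + 1) := by
          intro h
          have := hcinj h
          exact hone (by linear_combination -this)
        rcases trichotomous_of lt (c j) (c (j + 1)) with h | h | h
        · exact h
        · exact absurd h hne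
        · have := hkey _ _ hadj h
          rw [hcol j, hcol (j + 1)] at this
          omega
      have hchain : ∀ m : ℕ, 1 ≤ m → lt (c 0) (c (m : ZMod n)) := by
        intro m hm
        induction m with
        | zero => omega
        | succ m ih =>
          rcases Nat.lt_or_ge m 1 with h | h
          · have hm0 : m = 0 := by omega
            subst hm0
            have h2 := hfwd 0
            rw [zero_add] at h2
            have e : ((0 + 1 : ℕ) : ZMod n) = 1 := by push_cast; ring
            rw [e]
            exact h2
          · have h1 := ih h
            have h2 := hfwd (m : ZMod n)
            have : ((m + 1 : ℕ) : ZMod n) = (m : ZMod n) + 1 := by push_cast; ring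
            rw [this]
            exact trans_of lt h1 h2
      have := hchain n (by omega)
      rw [ZMod.natCast_self] at this
      exact irrefl_of lt (c 0) this
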